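/- Let V be a braided monoidal category and (A,v) a lax tricocycloid in V. Define a functor ∗ : V×V → V by X∗Y = A⊗X⊗Y and a natural family α_{X,Y,Z} : (X∗Y)∗Z → X∗(Y∗Z), that is α_{X,Y,Z} : A⊗(A⊗X⊗Y)⊗Z → A⊗X⊗(A⊗Y⊗Z), by α_{X,Y,Z} = (1_A⊗c_{A,X}⊗1_Y⊗1_Z)∘(v⊗1_X⊗1_Y⊗1_Z). Then α satisfies the pentagon axiom for a left skew-monoidal structure: (1_X∗α_{Y,Z,W})∘α_{X,Y∗Z,W}∘(α_{X,Y,Z}∗1_W) = α_{X,Y,Z∗W}∘α_{X∗Y,Z,W}. -/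

import Mathlib

open CategoryTheory MonoidalCategory

set_option maxHeartbeats 1000000

variable {V : Type*} [Category V] [MonoidalCategory V] [BraidedCategory V]

/-- The associativity constraint `α_{X,Y,Z} : (X∗Y)∗Z ⟶ X∗(Y∗Z)` of the warped tensor
`X ∗ Y = A ⊗ (X ⊗ Y)`, given by `(1_A ⊗ c_{A,X} ⊗ 1_Y ⊗ 1_Z) ∘ (v ⊗ 1_X ⊗ 1_Y ⊗ 1_Z)`,
written with explicit coherence isomorphisms. -/
def skewAssoc (A : V) (v : A ⊗ A ⟶ A ⊗ A) (X Y Z : V) :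
    A ⊗ ((A ⊗ (X ⊗ Y)) ⊗ Z) ⟶ A ⊗ (X ⊗ (A ⊗ (Y ⊗ Z))) :=
  (A ◁ (α_ A (X ⊗ Y) Z).hom) ≫ (α_ A A ((X ⊗ Y) ⊗ Z)).inv ≫ (v ▷ ((X ⊗ Y) ⊗ Z)) ≫
    (α_ A A ((X ⊗ Y) ⊗ Z)).hom ≫
    (A ◁ ((α_ A (X ⊗ Y) Z).inv ≫
      (((α_ A X Y).inv ≫ ((β_ A X).hom ▷ Y) ≫ (α_ X A Y).hom) ▷ Z) ≫
      (α_ X (A ⊗ Y) Z).hom ≫ (X ◁ (α_ A Y Z).hom)))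

set_option maxHeartbeats 10000000 in
/-- If `(A, v)` is a lax tricocycloid in a braided monoidal category `V`
(i.e. `v` satisfies the 3-cocycle condition), then the associativity constraint
`α_{X,Y,Z} = (1_A ⊗ c_{A,X} ⊗ 1) ∘ (v ⊗ 1)` for the tensor `X ∗ Y = A ⊗ (X ⊗ Y)` satisfies
the pentagon axiom of a left skew-monoidal structure:
`(1_X ∗ α_{Y,Z,W}) ∘ α_{X,Y∗Z,W} ∘ (α_{X,Y,Z} ∗ 1_W) = α_{X,Y,Z∗W} ∘ α_{X∗Y,Z,W}`. -/
theorem skewAssoc_pentagon (A : V) (v : A ⊗ A ⟶ A ⊗ A)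
    (hv : (v ▷ A) ≫ (α_ A A A).hom ≫ (A ◁ (β_ A A).hom) ≫ (α_ A A A).inv ≫ (v ▷ A) =
      (α_ A A A).hom ≫ (A ◁ v) ≫ (α_ A A A).inv ≫ (v ▷ A) ≫
        (α_ A A A).hom ≫ (A ◁ v) ≫ (α_ A A A).inv)
    (X Y Z W : V) :
    (A ◁ (skewAssoc A v X Y Z ▷ W)) ≫ skewAssoc A v X (A ⊗ (Y ⊗ Z)) W ≫
        (A ◁ (X ◁ skewAssoc A v Y Z W)) =
      skewAssoc A v (A ⊗ (X ⊗ Y)) Z W ≫ skewAssoc A v X Y (A ⊗ (Z ⊗ W)) := by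
  have key : (A ◁ v ≫ (α_ A A A).inv ≫ v ▷ A ≫ (α_ A A A).hom ≫ A ◁ v) =
      ((α_ A A A).inv ≫ v ▷ A ≫ (α_ A A A).hom ≫ A ◁ (β_ A A).hom ≫
        (α_ A A A).inv ≫ v ▷ A ≫ (α_ A A A).hom) := by
    rw [← cancel_epi (α_ A A A).hom, ← cancel_mono (α_ A A A).inv]
    simp only [Category.assoc, Iso.hom_inv_id, Iso.hom_inv_id_assoc, Category.comp_id]
    exact hv.symm
  calc
    _ = 𝟙 _ ⊗≫ (A ◁ (v ▷ (X ⊗ (Y ⊗ (Z ⊗ W)))))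
        ⊗≫ ((A ⊗ A) ◁ ((β_ A X).hom ▷ (Y ⊗ (Z ⊗ W))) ≫ v ▷ ((X ⊗ A) ⊗ (Y ⊗ (Z ⊗ W))))
        ⊗≫ (A ◁ ((β_ A X).hom ▷ (A ⊗ (Y ⊗ (Z ⊗ W)))))
        ⊗≫ (A ◁ (X ◁ (v ▷ (Y ⊗ (Z ⊗ W)))))
        ⊗≫ (A ◁ (X ◁ (A ◁ ((β_ A Y).hom ▷ (Z ⊗ W))))) ⊗≫ 𝟙 _ := by
      simp only [skewAssoc]; monoidal
    _ = 𝟙 _ ⊗≫ (A ◁ (v ▷ (X ⊗ (Y ⊗ (Z ⊗ W)))))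
        ⊗≫ (v ▷ ((A ⊗ X) ⊗ (Y ⊗ (Z ⊗ W))) ≫ (A ⊗ A) ◁ ((β_ A X).hom ▷ (Y ⊗ (Z ⊗ W))))
        ⊗≫ (A ◁ ((β_ A X).hom ▷ (A ⊗ (Y ⊗ (Z ⊗ W)))))
        ⊗≫ (A ◁ (X ◁ (v ▷ (Y ⊗ (Z ⊗ W)))))
        ⊗≫ (A ◁ (X ◁ (A ◁ ((β_ A Y).hom ▷ (Z ⊗ W))))) ⊗≫ 𝟙 _ := by
      rw [whisker_exchange]
    _ = 𝟙 _ ⊗≫ (A ◁ (v ▷ (X ⊗ (Y ⊗ (Z ⊗ W)))))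
        ⊗≫ (v ▷ ((A ⊗ X) ⊗ (Y ⊗ (Z ⊗ W))))
        ⊗≫ (A ◁ (((β_ (A ⊗ A) X).hom ≫ (X ◁ v)) ▷ (Y ⊗ (Z ⊗ W))))
        ⊗≫ (A ◁ (X ◁ (A ◁ ((β_ A Y).hom ▷ (Z ⊗ W))))) ⊗≫ 𝟙 _ := by
      rw [BraidedCategory.braiding_tensor_left_hom]; monoidal
    _ = 𝟙 _ ⊗≫ (A ◁ (v ▷ (X ⊗ (Y ⊗ (Z ⊗ W)))))
        ⊗≫ (v ▷ ((A ⊗ X) ⊗ (Y ⊗ (Z ⊗ W))))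
        ⊗≫ (A ◁ (((v ▷ X) ≫ (β_ (A ⊗ A) X).hom) ▷ (Y ⊗ (Z ⊗ W))))
        ⊗≫ (A ◁ (X ◁ (A ◁ ((β_ A Y).hom ▷ (Z ⊗ W))))) ⊗≫ 𝟙 _ := by
      rw [BraidedCategory.braiding_naturality_left]
    _ = 𝟙 _ ⊗≫ ((A ◁ v ≫ (α_ A A A).inv ≫ v ▷ A ≫ (α_ A A A).hom ≫ A ◁ v)
            ▷ (X ⊗ (Y ⊗ (Z ⊗ W))))
        ⊗≫ (A ◁ (A ◁ ((β_ A X).hom ▷ (Y ⊗ (Z ⊗ W)))))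
        ⊗≫ (A ◁ ((β_ A X).hom ▷ (A ⊗ (Y ⊗ (Z ⊗ W)))))
        ⊗≫ (A ◁ (X ◁ (A ◁ ((β_ A Y).hom ▷ (Z ⊗ W))))) ⊗≫ 𝟙 _ := by
      rw [BraidedCategory.braiding_tensor_left_hom]; monoidal
    _ = 𝟙 _ ⊗≫ (((α_ A A A).inv ≫ v ▷ A ≫ (α_ A A A).hom ≫ A ◁ (β_ A A).hom ≫
            (α_ A A A).inv ≫ v ▷ A ≫ (α_ A A A).hom) ▷ (X ⊗ (Y ⊗ (Z ⊗ W))))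
        ⊗≫ (A ◁ (A ◁ ((β_ A X).hom ▷ (Y ⊗ (Z ⊗ W)))))
        ⊗≫ (A ◁ ((β_ A X).hom ▷ (A ⊗ (Y ⊗ (Z ⊗ W)))))
        ⊗≫ (A ◁ (X ◁ (A ◁ ((β_ A Y).hom ▷ (Z ⊗ W))))) ⊗≫ 𝟙 _ := by
      rw [key]
    _ = 𝟙 _ ⊗≫ (v ▷ (A ⊗ (X ⊗ (Y ⊗ (Z ⊗ W)))))
        ⊗≫ (A ◁ ((β_ A A).hom ▷ (X ⊗ (Y ⊗ (Z ⊗ W)))))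
        ⊗≫ (v ▷ (A ⊗ (X ⊗ (Y ⊗ (Z ⊗ W)))))
        ⊗≫ (A ◁ (A ◁ ((β_ A X).hom ▷ (Y ⊗ (Z ⊗ W)))))
        ⊗≫ (A ◁ (((A ⊗ X) ◁ ((β_ A Y).hom ▷ (Z ⊗ W))) ≫
              ((β_ A X).hom ▷ ((Y ⊗ A) ⊗ (Z ⊗ W))))) ⊗≫ 𝟙 _ := by
      rw [whisker_exchange (β_ A X).hom ((β_ A Y).hom ▷ (Z ⊗ W))]; monoidal
    _ = 𝟙 _ ⊗≫ (v ▷ (A ⊗ (X ⊗ (Y ⊗ (Z ⊗ W)))))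
        ⊗≫ (A ◁ ((β_ A A).hom ▷ (X ⊗ (Y ⊗ (Z ⊗ W)))))
        ⊗≫ ((A ⊗ A) ◁ ((β_ A X).hom ▷ (Y ⊗ (Z ⊗ W))) ≫ v ▷ ((X ⊗ A) ⊗ (Y ⊗ (Z ⊗ W))))
        ⊗≫ (A ◁ (((A ⊗ X) ◁ ((β_ A Y).hom ▷ (Z ⊗ W))) ≫
              ((β_ A X).hom ▷ ((Y ⊗ A) ⊗ (Z ⊗ W))))) ⊗≫ 𝟙 _ := by
      rw [whisker_exchange v ((β_ A X).hom ▷ (Y ⊗ (Z ⊗ W)))]; monoidal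
    _ = 𝟙 _ ⊗≫ (v ▷ (A ⊗ (X ⊗ (Y ⊗ (Z ⊗ W)))))
        ⊗≫ (A ◁ ((β_ A A).hom ▷ (X ⊗ (Y ⊗ (Z ⊗ W)))))
        ⊗≫ (A ◁ (A ◁ ((β_ A X).hom ▷ (Y ⊗ (Z ⊗ W)))))
        ⊗≫ ((A ⊗ A) ◁ (X ◁ ((β_ A Y).hom ▷ (Z ⊗ W))) ≫ v ▷ (X ⊗ ((Y ⊗ A) ⊗ (Z ⊗ W))))
        ⊗≫ (A ◁ ((β_ A X).hom ▷ (Y ⊗ (A ⊗ (Z ⊗ W))))) ⊗≫ 𝟙 _ := by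
      rw [whisker_exchange v (X ◁ ((β_ A Y).hom ▷ (Z ⊗ W)))]; monoidal
    _ = _ := by
      simp only [skewAssoc, BraidedCategory.braiding_tensor_right_hom]
      monoidal
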